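/- Let λ, γ, κ, ρ, φ > 0 and let ν₁, ν₃ be the negative square roots as above (so ν₁² < ρ² < ν₃²). Define for s ≥ 0: S₄₄(s) = (1/(2ρ²(ν₁² − ν₃²))) · [ (ν₁²−ρ²)(ν₃²+ρ²)cosh(ν₃ s) − (ν₁²+ρ²)(ν₃²−ρ²)cosh(ν₁ s) + 2ρν₃(ν₁²−ρ²)sinh(ν₃ s) − 2ρν₁(ν₃²−ρ²)sinh(ν₁ s) ]. Then S₄₄(0) = 1 and S₄₄ is nondecreasing in s on [0, ∞); in particular S₄₄(s) ≥ 1 for all s ≥ 0. -/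

import Mathlib

set_option maxHeartbeats 1000000 in
theorem stmt_8 (l γ κ ρ φ : ℝ) (hl : 0 < l) (hγ : 0 < γ) (hκ : 0 < κ) (hρ : 0 < ρ)
    (hφ : 0 < φ)
    (θ c₁ c₂ ν₁ ν₃ : ℝ) (hθ : θ = l * ρ ^ 2 + ρ * κ * γ + φ) (hc₁ : c₁ = θ / l)
    (hc₂ : c₂ = Real.sqrt ((θ - 2 * φ) ^ 2 + 4 * φ * ρ * κ * γ) / l)
    (hν₁ : ν₁ = -Real.sqrt ((c₁ - c₂) / 2)) (hν₃ : ν₃ = -Real.sqrt ((c₁ + c₂) / 2))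
    (S₄₄ : ℝ → ℝ)
    (hS : ∀ s : ℝ, S₄₄ s = (1 / (2 * ρ ^ 2 * (ν₁ ^ 2 - ν₃ ^ 2))) *
      ((ν₁ ^ 2 - ρ ^ 2) * (ν₃ ^ 2 + ρ ^ 2) * Real.cosh (ν₃ * s)
        - (ν₁ ^ 2 + ρ ^ 2) * (ν₃ ^ 2 - ρ ^ 2) * Real.cosh (ν₁ * s)
        + 2 * ρ * ν₃ * (ν₁ ^ 2 - ρ ^ 2) * Real.sinh (ν₃ * s)
        - 2 * ρ * ν₁ * (ν₃ ^ 2 - ρ ^ 2) * Real.sinh (ν₁ * s))) :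
    S₄₄ 0 = 1 ∧ MonotoneOn S₄₄ (Set.Ici 0) ∧ ∀ s : ℝ, 0 ≤ s → 1 ≤ S₄₄ s := by
  set u := Real.sqrt ((θ - 2 * φ) ^ 2 + 4 * φ * ρ * κ * γ) with hu
  clear_value u
  have hE0 : (0:ℝ) ≤ (θ - 2 * φ) ^ 2 + 4 * φ * ρ * κ * γ := by positivity
  have hu2 : u ^ 2 = (θ - 2 * φ) ^ 2 + 4 * φ * ρ * κ * γ := by
    rw [hu]; exact Real.sq_sqrt hE0
  have hu0 : 0 ≤ u := by rw [hu]; exact Real.sqrt_nonneg _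
  have hθpos : 0 < θ := by rw [hθ]; positivity
  -- u < θ
  have huθ : u < θ := by nlinarith [mul_pos hl (mul_pos hρ hρ), mul_pos hρ (mul_pos hκ hγ)]
  -- key square comparison : (θ - 2lρ²)² < u²
  have hsq : (θ - 2 * l * ρ ^ 2) ^ 2 < u ^ 2 := by
    rw [hu2, hθ]; nlinarith [mul_pos (mul_pos hl (pow_pos hρ 3)) (mul_pos hκ hγ)]
  have hlow : θ - 2 * l * ρ ^ 2 < u := by nlinarith
  have hhigh : 2 * l * ρ ^ 2 - θ < u := by nlinarith
  -- values of ν₁², ν₃²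
  have hc12 : (c₁ - c₂) / 2 = (θ - u) / (2 * l) := by
    rw [hc₁, hc₂, div_sub_div_same, div_div]; ring_nf
  have hc12' : (c₁ + c₂) / 2 = (θ + u) / (2 * l) := by
    rw [hc₁, hc₂, ← add_div, div_div]; ring_nf
  have ha : ν₁ ^ 2 = (θ - u) / (2 * l) := by
    rw [hν₁, neg_sq, ← hc12, Real.sq_sqrt]
    rw [hc12]; exact div_nonneg (by linarith) (by positivity)
  have hb : ν₃ ^ 2 = (θ + u) / (2 * l) := by
    rw [hν₃, neg_sq, ← hc12', Real.sq_sqrt]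
    rw [hc12']; positivity
  have hν₁le : ν₁ ≤ 0 := by rw [hν₁]; exact neg_nonpos.mpr (Real.sqrt_nonneg _)
  have hν₃le : ν₃ ≤ 0 := by rw [hν₃]; exact neg_nonpos.mpr (Real.sqrt_nonneg _)
  have hav : ν₁ ^ 2 < ρ ^ 2 := by
    rw [ha, div_lt_iff₀ (by positivity)]; nlinarith
  have hbv : ρ ^ 2 < ν₃ ^ 2 := by
    rw [hb, lt_div_iff₀ (by positivity)]; nlinarith
  have hD : 0 < 2 * ρ ^ 2 * (ν₃ ^ 2 - ν₁ ^ 2) :=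
    mul_pos (by positivity) (by linarith)
  have hD' : (2 * ρ ^ 2 * (ν₁ ^ 2 - ν₃ ^ 2)) ≠ 0 := by
    have h : 2 * ρ ^ 2 * (ν₁ ^ 2 - ν₃ ^ 2) = -(2 * ρ ^ 2 * (ν₃ ^ 2 - ν₁ ^ 2)) := by ring
    rw [h]; exact neg_ne_zero.mpr (ne_of_gt hD)
  -- rewrite S₄₄ as a nonnegative combination
  have key : ∀ s : ℝ, S₄₄ s =
      ((ρ ^ 2 - ν₁ ^ 2) * (ν₃ ^ 2 + ρ ^ 2) * Real.cosh (-ν₃ * s)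
        + (ν₁ ^ 2 + ρ ^ 2) * (ν₃ ^ 2 - ρ ^ 2) * Real.cosh (-ν₁ * s)
        + 2 * ρ * (-ν₃) * (ρ ^ 2 - ν₁ ^ 2) * Real.sinh (-ν₃ * s)
        + 2 * ρ * (-ν₁) * (ν₃ ^ 2 - ρ ^ 2) * Real.sinh (-ν₁ * s))
        / (2 * ρ ^ 2 * (ν₃ ^ 2 - ν₁ ^ 2)) := by
    intro s
    rw [hS s]
    simp only [neg_mul, Real.cosh_neg, Real.sinh_neg]
    rw [eq_div_iff (ne_of_gt hD), one_div, inv_mul_eq_div, div_mul_eq_mul_div,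
      div_eq_iff hD']
    ring
  have hA : 0 ≤ (ρ ^ 2 - ν₁ ^ 2) * (ν₃ ^ 2 + ρ ^ 2) :=
    mul_nonneg (by linarith) (by positivity)
  have hB : 0 ≤ (ν₁ ^ 2 + ρ ^ 2) * (ν₃ ^ 2 - ρ ^ 2) :=
    mul_nonneg (by positivity) (by linarith)
  have hC : 0 ≤ 2 * ρ * (-ν₃) * (ρ ^ 2 - ν₁ ^ 2) :=
    mul_nonneg (mul_nonneg (by linarith) (by linarith)) (by linarith)
  have hEc : 0 ≤ 2 * ρ * (-ν₁) * (ν₃ ^ 2 - ρ ^ 2) :=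
    mul_nonneg (mul_nonneg (by linarith) (by linarith)) (by linarith)
  have h0 : S₄₄ 0 = 1 := by
    rw [key 0]
    simp only [mul_zero, Real.cosh_zero, Real.sinh_zero]
    rw [div_eq_one_iff_eq (ne_of_gt hD)]
    ring
  have hmono : MonotoneOn S₄₄ (Set.Ici 0) := by
    intro s hs t ht hst
    simp only [Set.mem_Ici] at hs ht
    rw [key s, key t]
    have hν₃' : 0 ≤ -ν₃ := by linarith
    have hν₁' : 0 ≤ -ν₁ := by linarith
    have hm3 : -ν₃ * s ≤ -ν₃ * t := mul_le_mul_of_nonneg_left hst hν₃'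
    have hm1 : -ν₁ * s ≤ -ν₁ * t := mul_le_mul_of_nonneg_left hst hν₁'
    have h1 : Real.cosh (-ν₃ * s) ≤ Real.cosh (-ν₃ * t) := by
      rw [Real.cosh_le_cosh, abs_of_nonneg (mul_nonneg hν₃' hs),
        abs_of_nonneg (mul_nonneg hν₃' ht)]
      exact hm3
    have h2 : Real.cosh (-ν₁ * s) ≤ Real.cosh (-ν₁ * t) := by
      rw [Real.cosh_le_cosh, abs_of_nonneg (mul_nonneg hν₁' hs),
        abs_of_nonneg (mul_nonneg hν₁' ht)]
      exact hm1
    have h3 : Real.sinh (-ν₃ * s) ≤ Real.sinh (-ν₃ * t) := Real.sinh_le_sinh.mpr hm3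
    have h4 : Real.sinh (-ν₁ * s) ≤ Real.sinh (-ν₁ * t) := Real.sinh_le_sinh.mpr hm1
    have hsum := add_le_add (add_le_add (add_le_add
      (mul_le_mul_of_nonneg_left h1 hA) (mul_le_mul_of_nonneg_left h2 hB))
      (mul_le_mul_of_nonneg_left h3 hC)) (mul_le_mul_of_nonneg_left h4 hEc)
    exact div_le_div_of_nonneg_right hsum hD.le
  refine ⟨h0, hmono, fun s hs => ?_⟩
  have := hmono (Set.mem_Ici.mpr le_rfl) (Set.mem_Ici.mpr hs) hs
  rw [h0] at this
  exact this
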